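/- Let n ≥ 2, X ⊆ ℝ^n with ‖X‖_∞ < ∞, x* a lexicographic maximum of X, c > 0 and γ ∈ [0,1). If x_{c,γ} ∈ X satisfies L_c(x_{c,γ}) ≤ inf_{x∈X} L_c(x) + γ·exp(−c‖X‖_∞), then for k ∈ {1,2}: σ_k(x*) − σ_k(x_{c,γ}) ≤ (1/c)·log((n−k+1)/(1−γ)). -/

import Mathlib

set_option maxHeartbeats 1000000


open Real

noncomputable def sortedComp {n : ℕ} (x : Fin n → ℝ) (k : Fin n) : ℝ :=
  x (Tuple.sort x k)

def IsLexMax {n : ℕ} (X : Set (Fin n → ℝ)) (y : Fin n → ℝ) : Prop :=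
  y ∈ X ∧ ∀ x ∈ X, x = y ∨ ∃ i : Fin n,
    (∀ j : Fin n, j < i → sortedComp y j = sortedComp x j) ∧
    sortedComp x i < sortedComp y i

/-- The exponential loss. -/
noncomputable def expLoss {n : ℕ} (c : ℝ) (x : Fin n → ℝ) : ℝ :=
  ∑ i, Real.exp (-c * x i)

/-- The sup of the sup-norms of elements of X, i.e. ‖X‖_∞. -/
noncomputable def supNorm {n : ℕ} (X : Set (Fin n → ℝ)) : ℝ :=
  sSup ((fun x : Fin n → ℝ => ‖x‖) '' X)

theorem first_two_components_rate {n : ℕ} (hn : 2 ≤ n) (X : Set (Fin n → ℝ))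
    (hbdd : BddAbove ((fun x : Fin n → ℝ => ‖x‖) '' X))
    (xstar : Fin n → ℝ) (hstar : IsLexMax X xstar)
    (c γ : ℝ) (hc : 0 < c) (hγ0 : 0 ≤ γ) (hγ1 : γ < 1)
    (xc : Fin n → ℝ) (hxc : xc ∈ X)
    (hloss : expLoss c xc ≤ sInf (expLoss c '' X) + γ * Real.exp (-c * supNorm X)) :
    ∀ k : Fin n, k.val < 2 →
      sortedComp xstar k - sortedComp xc k ≤ (1 / c) * Real.log ((n - k.val) / (1 - γ)) := by
  intro k hk
  have h1γ : (0:ℝ) < 1 - γ := by linarith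
  set M := supNorm X with hM
  set i0 : Fin n := ⟨0, by omega⟩ with hi0def
  set i1 : Fin n := ⟨1, by omega⟩ with hi1def
  -- basic facts
  have hnormle : ∀ x ∈ X, ‖x‖ ≤ M := fun x hx => le_csSup hbdd ⟨x, hx, rfl⟩
  have hcomp_le : ∀ x ∈ X, ∀ j : Fin n, sortedComp x j ≤ M := by
    intro x hx j
    calc sortedComp x j ≤ |x (Tuple.sort x j)| := le_abs_self _
      _ ≤ ‖x‖ := by simpa [Real.norm_eq_abs] using norm_le_pi_norm x (Tuple.sort x j)
      _ ≤ M := hnormle x hx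
  have hexpM : ∀ x ∈ X, ∀ j : Fin n,
      Real.exp (-c * M) ≤ Real.exp (-c * sortedComp x j) := by
    intro x hx j
    apply Real.exp_le_exp.2
    have := hcomp_le x hx j
    nlinarith
  have hsum : ∀ x : Fin n → ℝ, expLoss c x = ∑ j, Real.exp (-c * sortedComp x j) := by
    intro x
    unfold expLoss sortedComp
    exact (Equiv.sum_comp (Tuple.sort x) (fun i => Real.exp (-c * x i))).symm
  have hmono : ∀ x : Fin n → ℝ, ∀ i j : Fin n, i ≤ j → sortedComp x i ≤ sortedComp x j :=
    fun x i j hij => Tuple.monotone_sort x hij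
  have hbddb : BddBelow (expLoss c '' X) := by
    refine ⟨0, ?_⟩
    rintro _ ⟨x, hx, rfl⟩
    exact Finset.sum_nonneg fun i _ => (Real.exp_pos _).le
  have hinf : sInf (expLoss c '' X) ≤ expLoss c xstar := csInf_le hbddb ⟨xstar, hstar.1, rfl⟩
  have hloss' : expLoss c xc ≤ expLoss c xstar + γ * Real.exp (-c * M) := by linarith
  -- σ₀(x*) ≥ σ₀(xc)
  have hσ0 : sortedComp xc i0 ≤ sortedComp xstar i0 := by
    rcases hstar.2 xc hxc with h | ⟨i, hprev, hlt⟩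
    · rw [h]
    · by_cases hi : i0 < i
      · exact (hprev i0 hi).ge
      · have : i = i0 := by
          have := Fin.lt_def.not.mp hi
          apply Fin.ext
          simp only [hi0def] at this ⊢
          omega
        rw [this] at hlt
        exact hlt.le
  -- conversion lemma
  have key : ∀ m a b : ℝ, 0 < m → (1 - γ) * Real.exp (-c * a) ≤ m * Real.exp (-c * b) →
      b - a ≤ 1 / c * Real.log (m / (1 - γ)) := by
    intro m a b hm h
    have hexp : Real.exp (c * (b - a)) ≤ m / (1 - γ) := by
      rw [show c * (b - a) = (-c * a) - (-c * b) by ring, Real.exp_sub,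
        div_le_div_iff₀ (Real.exp_pos _) h1γ]
      nlinarith
    have hlog : c * (b - a) ≤ Real.log (m / (1 - γ)) :=
      (Real.le_log_iff_exp_le (by positivity)).2 hexp
    rw [one_div, inv_mul_eq_div, le_div_iff₀ hc]
    linarith [hlog]
  -- the two principal estimates
  have est0 : (1 - γ) * Real.exp (-c * sortedComp xc i0)
      ≤ (n : ℝ) * Real.exp (-c * sortedComp xstar i0) := by
    have h1 : Real.exp (-c * sortedComp xc i0) ≤ expLoss c xc := by
      rw [hsum xc]
      exact Finset.single_le_sum (f := fun j => Real.exp (-c * sortedComp xc j)) (fun j _ => (Real.exp_pos _).le) (Finset.mem_univ i0)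
    have h2 : expLoss c xstar ≤ (n : ℝ) * Real.exp (-c * sortedComp xstar i0) := by
      rw [hsum xstar]
      calc ∑ j, Real.exp (-c * sortedComp xstar j)
          ≤ ∑ _j : Fin n, Real.exp (-c * sortedComp xstar i0) := by
            refine Finset.sum_le_sum fun j _ => Real.exp_le_exp.2 ?_
            have := hmono xstar i0 j (by simp [hi0def, Fin.le_def])
            nlinarith
        _ = (n : ℝ) * Real.exp (-c * sortedComp xstar i0) := by
            simp [Finset.sum_const, mul_comm]
    have h3 := hexpM xc hxc i0
    nlinarith [Real.exp_pos (-c * M)]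
  have est1 : (1 - γ) * Real.exp (-c * sortedComp xc i1)
      ≤ ((n : ℝ) - 1) * Real.exp (-c * sortedComp xstar i1) := by
    have hne : i0 ≠ i1 := by simp [hi0def, hi1def, Fin.ext_iff]
    have h1 : Real.exp (-c * sortedComp xc i0) + Real.exp (-c * sortedComp xc i1)
        ≤ expLoss c xc := by
      rw [hsum xc]
      have hsub := Finset.sum_le_sum_of_subset_of_nonneg
        (Finset.subset_univ ({i0, i1} : Finset (Fin n)))
        (fun j _ _ => (Real.exp_pos (-c * sortedComp xc j)).le)
      rwa [Finset.sum_pair hne] at hsub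
    have h2 : expLoss c xstar ≤ Real.exp (-c * sortedComp xstar i0)
        + ((n : ℝ) - 1) * Real.exp (-c * sortedComp xstar i1) := by
      rw [hsum xstar, ← Finset.add_sum_erase Finset.univ _ (Finset.mem_univ i0)]
      refine add_le_add_right ?_ _
      calc ∑ j ∈ Finset.univ.erase i0, Real.exp (-c * sortedComp xstar j)
          ≤ ∑ _j ∈ Finset.univ.erase i0, Real.exp (-c * sortedComp xstar i1) := by
            refine Finset.sum_le_sum fun j hj => Real.exp_le_exp.2 ?_
            have hj0 : j ≠ i0 := Finset.ne_of_mem_erase hj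
            have hle : i1 ≤ j := by
              have hj0' : j.val ≠ 0 := fun hh => hj0 (Fin.ext (by simp [hi0def, hh]))
              rw [hi1def, Fin.le_def]
              show 1 ≤ j.val
              omega
            have := hmono xstar i1 j hle
            nlinarith
        _ = ((n : ℝ) - 1) * Real.exp (-c * sortedComp xstar i1) := by
            rw [Finset.sum_const, Finset.card_erase_of_mem (Finset.mem_univ i0),
              Finset.card_univ, Fintype.card_fin, nsmul_eq_mul, Nat.cast_sub (by omega)]
            simp
    have h3 := hexpM xc hxc i1
    have h4 : Real.exp (-c * sortedComp xstar i0) ≤ Real.exp (-c * sortedComp xc i0) :=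
      Real.exp_le_exp.2 (by nlinarith)
    nlinarith [Real.exp_pos (-c * M)]
  -- finish by cases on k
  obtain h | h : k.val = 0 ∨ k.val = 1 := by omega
  · have hk' : k = i0 := Fin.ext (by simp [hi0def, h])
    rw [hk']
    simpa [show (i0 : ℕ) = 0 from rfl] using key (n : ℝ) _ _ (by positivity) est0
  · have hk' : k = i1 := Fin.ext (by simp [hi1def, h])
    rw [hk']
    have hn1 : (0:ℝ) < (n:ℝ) - 1 := by
      have : (2:ℝ) ≤ (n:ℝ) := by exact_mod_cast hn
      linarith
    simpa [show (i1 : ℕ) = 1 from rfl] using key ((n : ℝ) - 1) _ _ hn1 est1
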